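/- For polynomial maps fixing the origin, the local algebra of a product map is the tensor product of local algebras: if f: 𝔸ⁿ → 𝔸ⁿ and g: 𝔸ᵐ → 𝔸ᵐ both send 0 to 0 with 0 isolated in its fiber, and F: 𝔸^{n+m} → 𝔸^{n+m} is defined by F(x,y) = (f(x), g(y)), then Q(F) ≅ Q(f) ⊗_K Q(g) as K-algebras, and the EKL-degree satisfies deg₀^{EKL}(F) = deg₀^{EKL}(f) · deg₀^{EKL}(g) in GW(K). -/

import Mathlib

/-- A symmetric nondegenerate bilinear form over `K`, presented by its Gram matrix. -/
structure SymMat (K : Type) [Field K] where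
  n : ℕ
  M : Matrix (Fin n) (Fin n) K
  symm : M.IsSymm
  nondeg : IsUnit M.det

variable (K : Type) [Field K]

open Matrix in
/-- The defining relations of the Grothendieck–Witt ring: isomorphic (congruent) forms are
identified, orthogonal direct sum corresponds to addition, tensor product (Kronecker product
of Gram matrices) corresponds to multiplication, the form `⟨1⟩` is the unit and the trivial
form is zero. -/
inductive GWRel : FreeCommRing (SymMat K) → FreeCommRing (SymMat K) → Prop
  | congr (A B : SymMat K) (h : A.n = B.n) (P : Matrix (Fin B.n) (Fin B.n) K)
      (hP : IsUnit P.det)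
      (hc : Matrix.reindex (finCongr h) (finCongr h) A.M = Pᵀ * B.M * P) :
      GWRel (.of A) (.of B)
  | add (A B C : SymMat K) (h : C.n = A.n + B.n)
      (hc : Matrix.reindex (finCongr h) (finCongr h) C.M
        = Matrix.reindex finSumFinEquiv finSumFinEquiv (Matrix.fromBlocks A.M 0 0 B.M)) :
      GWRel (.of C) (.of A + .of B)
  | mul (A B C : SymMat K) (h : C.n = A.n * B.n)
      (hc : Matrix.reindex (finCongr h) (finCongr h) C.M
        = Matrix.reindex finProdFinEquiv finProdFinEquiv
            (Matrix.kroneckerMap (· * ·) A.M B.M)) :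
      GWRel (.of C) (.of A * .of B)
  | one (A : SymMat K) (h : A.n = 1) (hc : ∀ i j, A.M i j = 1) :
      GWRel (.of A) 1
  | zero (A : SymMat K) (h : A.n = 0) :
      GWRel (.of A) 0

/-- The Grothendieck–Witt ring of the field `K`. -/
def GW : Type := RingQuot (GWRel K)

noncomputable instance : CommRing (GW K) := inferInstanceAs (CommRing (RingQuot (GWRel K)))

variable {K}

/-- The class in `GW K` of a symmetric nondegenerate bilinear form. -/
noncomputable def SymMat.cls (A : SymMat K) : GW K :=
  RingQuot.mkRingHom (GWRel K) (FreeCommRing.of A)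

/-- `⟨u⟩ : GW K`, the class of the rank-one form `(x, y) ↦ u * x * y`. -/
noncomputable def GW.diag (u : Kˣ) : GW K :=
  SymMat.cls ⟨1, Matrix.of fun _ _ => (u : K),
    by ext i j; rfl,
    by rw [Matrix.det_fin_one]; exact u.isUnit⟩

open MvPolynomial

section EKL

variable (K : Type) [Field K] (σ : Type) [Fintype σ] [DecidableEq σ]

/-- The maximal ideal of the origin in `𝔸^σ = Spec K[x_v : v ∈ σ]`. -/
noncomputable def originIdeal : Ideal (MvPolynomial σ K) :=
  RingHom.ker (constantCoeff : MvPolynomial σ K →+* K)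

instance : (originIdeal K σ).IsMaximal :=
  RingHom.ker_isMaximal_of_surjective constantCoeff fun r => ⟨C r, constantCoeff_C _ r⟩

/-- The local ring of `𝔸^σ` at the origin. -/
abbrev OriginLoc : Type := Localization.AtPrime (originIdeal K σ)

variable {K σ}

/-- The local algebra `Q(f)` at the origin of the map `𝔸^σ → 𝔸^σ` with components `f`:
the localization of `K[x]` at the maximal ideal of the origin, modulo the components. -/
def LocalAlg (f : σ → MvPolynomial σ K) : Type :=
  OriginLoc K σ ⧸ Ideal.span
    (Set.range fun i => algebraMap (MvPolynomial σ K) (OriginLoc K σ) (f i))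

noncomputable instance (f : σ → MvPolynomial σ K) : CommRing (LocalAlg f) :=
  inferInstanceAs (CommRing (OriginLoc K σ ⧸ Ideal.span
    (Set.range fun i => algebraMap (MvPolynomial σ K) (OriginLoc K σ) (f i))))

/-- The canonical map `K[x] → Q(f)`. -/
noncomputable def toLocalAlg (f : σ → MvPolynomial σ K) :
    MvPolynomial σ K →+* LocalAlg f :=
  (Ideal.Quotient.mk _).comp (algebraMap (MvPolynomial σ K) (OriginLoc K σ))

noncomputable instance (f : σ → MvPolynomial σ K) : Algebra K (LocalAlg f) :=
  ((toLocalAlg f).comp (algebraMap K (MvPolynomial σ K))).toAlgebra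

/-- `d ∈ GW(K)` is the EKL-degree at the origin of the map `𝔸^σ → 𝔸^σ` with components
`f`: for a decomposition `f i = ∑ j a i j * x j`, the distinguished socle element is
`E(f) = det a ∈ Q(f)`, and the degree is the Grothendieck–Witt class of the bilinear form
`(u, v) ↦ φ(u * v)` on `Q(f)`, where `φ` is a linear functional with `φ(E(f)) = 1`. -/
def IsEKLDeg (f : σ → MvPolynomial σ K) (d : GW K) : Prop :=
  ∃ a : Matrix σ σ (MvPolynomial σ K),
    (∀ i, f i = ∑ j, a i j * X j) ∧
    ∃ (m : ℕ) (bQ : Module.Basis (Fin m) K (LocalAlg f)) (φ : LocalAlg f →ₗ[K] K),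
      φ (toLocalAlg f a.det) = 1 ∧
      ∃ (hs : (Matrix.of fun i j : Fin m => φ (bQ i * bQ j)).IsSymm)
        (hnd : IsUnit (Matrix.of fun i j : Fin m => φ (bQ i * bQ j)).det),
        SymMat.cls ⟨m, Matrix.of fun i j : Fin m => φ (bQ i * bQ j), hs, hnd⟩ = d

end EKL


section Basic
variable {σ : Type} [Fintype σ] [DecidableEq σ]


lemma mem_originIdeal_iff {p : MvPolynomial σ K} :
    p ∈ originIdeal K σ ↔ constantCoeff p = 0 := RingHom.mem_ker

/-- `K[x] → Q(f)` as an algebra hom. -/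
noncomputable def toLocalAlgA (f : σ → MvPolynomial σ K) :
    MvPolynomial σ K →ₐ[K] LocalAlg f :=
  { toLocalAlg f with commutes' := fun _ => rfl }

@[simp] lemma toLocalAlgA_apply (f : σ → MvPolynomial σ K) (p : MvPolynomial σ K) :
    toLocalAlgA f p = toLocalAlg f p := rfl

lemma toLocalAlg_self_eq_zero (f : σ → MvPolynomial σ K) (i : σ) :
    toLocalAlg f (f i) = 0 :=
  Ideal.Quotient.eq_zero_iff_mem.mpr (Ideal.subset_span ⟨i, rfl⟩)

lemma isUnit_toLocalAlg (f : σ → MvPolynomial σ K) {p : MvPolynomial σ K}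
    (hp : p ∉ originIdeal K σ) : IsUnit (toLocalAlg f p) :=
  (IsLocalization.map_units (OriginLoc K σ)
    (⟨p, hp⟩ : (originIdeal K σ).primeCompl)).map (Ideal.Quotient.mk _)

lemma not_isUnit_mk {R : Type*} [CommRing R] {I m : Ideal R} (hm : m ≠ ⊤) (hI : I ≤ m)
    {x : R} (hx : x ∈ m) : ¬ IsUnit (Ideal.Quotient.mk I x) := by
  intro h
  obtain ⟨u, hu⟩ := h
  obtain ⟨y, hy⟩ := Ideal.Quotient.mk_surjective (I := I) ↑u⁻¹
  have hy1 : Ideal.Quotient.mk I (y * x) = Ideal.Quotient.mk I 1 := by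
    rw [map_mul, hy, ← hu, map_one]; exact u.inv_mul
  rw [Ideal.Quotient.mk_eq_mk_iff_sub_mem] at hy1
  have h1 : (1 : R) ∈ m := by
    have := m.sub_mem (m.mul_mem_left y hx) (hI hy1)
    simpa using this
  exact hm ((Ideal.eq_top_iff_one m).mpr h1)

variable (f : σ → MvPolynomial σ K)

lemma span_le_maximal (hf0 : ∀ i, constantCoeff (f i) = 0) :
    Ideal.span (Set.range fun i => algebraMap (MvPolynomial σ K) (OriginLoc K σ) (f i))
      ≤ IsLocalRing.maximalIdeal (OriginLoc K σ) := by
  rw [Ideal.span_le]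
  rintro _ ⟨i, rfl⟩
  exact (IsLocalization.AtPrime.to_map_mem_maximal_iff _ _ _).mpr
    (mem_originIdeal_iff.mpr (hf0 i))

lemma not_isUnit_toLocalAlg (hf0 : ∀ i, constantCoeff (f i) = 0)
    {p : MvPolynomial σ K} (hp : constantCoeff p = 0) : ¬ IsUnit (toLocalAlg f p) :=
  not_isUnit_mk (Ideal.IsMaximal.ne_top inferInstance) (span_le_maximal f hf0)
    ((IsLocalization.AtPrime.to_map_mem_maximal_iff _ _ _).mpr (mem_originIdeal_iff.mpr hp))

lemma isLocalRing_localAlg (hf0 : ∀ i, constantCoeff (f i) = 0) :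
    IsLocalRing (LocalAlg f) := by
  have hne : Ideal.span (Set.range fun i =>
      algebraMap (MvPolynomial σ K) (OriginLoc K σ) (f i)) ≠ ⊤ := by
    intro h
    exact Ideal.IsMaximal.ne_top (inferInstance :
      (IsLocalRing.maximalIdeal (OriginLoc K σ)).IsMaximal)
      (top_le_iff.mp (h ▸ span_le_maximal f hf0))
  haveI : Nontrivial (LocalAlg f) := Ideal.Quotient.nontrivial_iff.mpr hne
  exact IsLocalRing.of_surjective' (Ideal.Quotient.mk _) Ideal.Quotient.mk_surjective

lemma isNilpotent_toLocalAlg [FiniteDimensional K (LocalAlg f)]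
    (hf0 : ∀ i, constantCoeff (f i) = 0)
    {p : MvPolynomial σ K} (hp : constantCoeff p = 0) :
    IsNilpotent (toLocalAlg f p) := by
  haveI := isLocalRing_localAlg f hf0
  haveI : IsArtinianRing (LocalAlg f) :=
    isArtinian_of_tower K (inferInstance : IsArtinian K (LocalAlg f))
  obtain ⟨k, hk⟩ := IsArtinianRing.isNilpotent_jacobson_bot (R := LocalAlg f)
  refine ⟨k, ?_⟩
  have hmem : toLocalAlg f p ∈ IsLocalRing.maximalIdeal (LocalAlg f) := by
    rw [IsLocalRing.mem_maximalIdeal, mem_nonunits_iff]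
    exact not_isUnit_toLocalAlg f hf0 hp
  rw [← IsLocalRing.jacobson_eq_maximalIdeal ⊥ bot_ne_top] at hmem
  have := Ideal.pow_mem_pow hmem k
  rw [hk] at this
  simpa using this

end Basic

section Product


variable {n m : ℕ} (f : Fin n → MvPolynomial (Fin n) K) (g : Fin m → MvPolynomial (Fin m) K)

/-- The product map `F(x,y) = (f(x), g(y))`. -/
noncomputable abbrev sumMap : Fin n ⊕ Fin m → MvPolynomial (Fin n ⊕ Fin m) K :=
  Sum.elim (fun i => rename Sum.inl (f i)) (fun j => rename Sum.inr (g j))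

/-- `K[x,y] → Q(f) ⊗ Q(g)`. -/
noncomputable def tensAux :
    MvPolynomial (Fin n ⊕ Fin m) K →ₐ[K] TensorProduct K (LocalAlg f) (LocalAlg g) :=
  aeval (Sum.elim (fun i => toLocalAlg f (X i) ⊗ₜ[K] 1)
    (fun j => (1 : LocalAlg f) ⊗ₜ[K] toLocalAlg g (X j)))

@[simp] lemma tensAux_X_inl (i : Fin n) :
    tensAux f g (X (Sum.inl i)) = toLocalAlg f (X i) ⊗ₜ[K] 1 := by
  simp [tensAux]

@[simp] lemma tensAux_X_inr (j : Fin m) :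
    tensAux f g (X (Sum.inr j)) = (1 : LocalAlg f) ⊗ₜ[K] toLocalAlg g (X j) := by
  simp [tensAux]

lemma tensAux_comp_rename_inl :
    (tensAux f g).comp (rename Sum.inl) =
      (Algebra.TensorProduct.includeLeft (S := K)).comp (toLocalAlgA f) := by
  apply MvPolynomial.algHom_ext
  intro i
  simp [tensAux]

lemma tensAux_comp_rename_inr :
    (tensAux f g).comp (rename Sum.inr) =
      (Algebra.TensorProduct.includeRight).comp (toLocalAlgA g) := by
  apply MvPolynomial.algHom_ext
  intro j
  simp [tensAux]

variable [FiniteDimensional K (LocalAlg f)] [FiniteDimensional K (LocalAlg g)]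

lemma tensAux_sub_mem (hf0 : ∀ i, constantCoeff (f i) = 0)
    (hg0 : ∀ j, constantCoeff (g j) = 0) (p : MvPolynomial (Fin n ⊕ Fin m) K) :
    tensAux f g p - algebraMap K _ (constantCoeff p) ∈
      nilradical (TensorProduct K (LocalAlg f) (LocalAlg g)) := by
  induction p using MvPolynomial.induction_on with
  | C a => simp
  | add p q hp hq =>
      have := add_mem hp hq
      rw [map_add, map_add, map_add]
      convert this using 1
      ring
  | mul_X p i hp =>
      have hX : tensAux f g (X i) ∈
          nilradical (TensorProduct K (LocalAlg f) (LocalAlg g)) := by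
        rw [mem_nilradical]
        cases i with
        | inl i =>
            rw [tensAux_X_inl]
            exact (isNilpotent_toLocalAlg f hf0 (by simp)).map
              (Algebra.TensorProduct.includeLeft (S := K) :
                LocalAlg f →ₐ[K] TensorProduct K (LocalAlg f) (LocalAlg g))
        | inr j =>
            rw [tensAux_X_inr]
            exact (isNilpotent_toLocalAlg g hg0 (by simp)).map
              (Algebra.TensorProduct.includeRight :
                LocalAlg g →ₐ[K] TensorProduct K (LocalAlg f) (LocalAlg g))
      rw [map_mul, map_mul, constantCoeff_X, mul_zero, map_zero, sub_zero]
      exact Ideal.mul_mem_left _ _ hX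

lemma tensAux_isUnit (hf0 : ∀ i, constantCoeff (f i) = 0)
    (hg0 : ∀ j, constantCoeff (g j) = 0) {p : MvPolynomial (Fin n ⊕ Fin m) K}
    (hp : p ∉ originIdeal K (Fin n ⊕ Fin m)) : IsUnit (tensAux f g p) := by
  have h := tensAux_sub_mem f g hf0 hg0 p
  rw [mem_nilradical] at h
  have hc : constantCoeff p ≠ 0 := fun h0 => hp (mem_originIdeal_iff.mpr h0)
  have hu : IsUnit (algebraMap K (TensorProduct K (LocalAlg f) (LocalAlg g))
      (constantCoeff p)) := (IsUnit.mk0 _ hc).map _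
  have := h.isUnit_add_right_of_commute hu (Commute.all _ _)
  simpa using this

end Product


set_option linter.unusedSectionVars false

section Basic2
variable {σ : Type} [Fintype σ] [DecidableEq σ]

/-- Extensionality for algebra maps out of `Q(f)`. -/
lemma localAlg_algHom_ext {h : σ → MvPolynomial σ K} {S : Type} [CommRing S] [Algebra K S]
    {F G : LocalAlg h →ₐ[K] S}
    (hFG : F.comp (toLocalAlgA h) = G.comp (toLocalAlgA h)) : F = G := by
  have key : (F : LocalAlg h →+* S) = (G : LocalAlg h →+* S) := by
    apply Ideal.Quotient.ringHom_ext
    apply IsLocalization.ringHom_ext (originIdeal K σ).primeCompl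
    refine RingHom.ext fun p => ?_
    exact AlgHom.congr_fun hFG p
  exact AlgHom.ext fun x => DFunLike.congr_fun key x

end Basic2

section Product3
variable {n m : ℕ} (f : Fin n → MvPolynomial (Fin n) K) (g : Fin m → MvPolynomial (Fin m) K)
variable [FiniteDimensional K (LocalAlg f)] [FiniteDimensional K (LocalAlg g)]
variable (hf0 : ∀ i, constantCoeff (f i) = 0) (hg0 : ∀ j, constantCoeff (g j) = 0)

/-- The induced map on the localization at the origin. -/
noncomputable def phiLoc : OriginLoc K (Fin n ⊕ Fin m) →+*
    TensorProduct K (LocalAlg f) (LocalAlg g) :=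
  IsLocalization.lift (M := (originIdeal K (Fin n ⊕ Fin m)).primeCompl)
    (g := (tensAux f g : MvPolynomial (Fin n ⊕ Fin m) K →+* _))
    (fun s => tensAux_isUnit f g hf0 hg0 s.2)

@[simp] lemma phiLoc_algebraMap (q : MvPolynomial (Fin n ⊕ Fin m) K) :
    phiLoc f g hf0 hg0 (algebraMap _ _ q) = tensAux f g q :=
  IsLocalization.lift_eq _ q

lemma phiLoc_vanish : ∀ a ∈ Ideal.span (Set.range fun v =>
    algebraMap (MvPolynomial (Fin n ⊕ Fin m) K) (OriginLoc K (Fin n ⊕ Fin m)) (sumMap f g v)),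
    phiLoc f g hf0 hg0 a = 0 := by
  have hsp : Ideal.span (Set.range fun v =>
      algebraMap (MvPolynomial (Fin n ⊕ Fin m) K) (OriginLoc K (Fin n ⊕ Fin m)) (sumMap f g v))
        ≤ RingHom.ker (phiLoc f g hf0 hg0) := by
    rw [Ideal.span_le]
    rintro _ ⟨v, rfl⟩
    rw [SetLike.mem_coe, RingHom.mem_ker, phiLoc_algebraMap]
    cases v with
    | inl i =>
        have h := AlgHom.congr_fun (tensAux_comp_rename_inl f g) (f i)
        simp only [AlgHom.comp_apply, toLocalAlgA_apply] at h
        rw [show sumMap f g (Sum.inl i) = rename Sum.inl (f i) from rfl, h,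
          toLocalAlg_self_eq_zero, map_zero]
    | inr j =>
        have h := AlgHom.congr_fun (tensAux_comp_rename_inr f g) (g j)
        simp only [AlgHom.comp_apply, toLocalAlgA_apply] at h
        rw [show sumMap f g (Sum.inr j) = rename Sum.inr (g j) from rfl, h,
          toLocalAlg_self_eq_zero, map_zero]
  exact fun a ha => hsp ha

/-- `Q(F) → Q(f) ⊗ Q(g)` as a ring hom. -/
noncomputable def Phi0 : LocalAlg (sumMap f g) →+* TensorProduct K (LocalAlg f) (LocalAlg g) :=
  Ideal.Quotient.lift _ (phiLoc f g hf0 hg0) (phiLoc_vanish f g hf0 hg0)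

lemma Phi0_toLocalAlg (q : MvPolynomial (Fin n ⊕ Fin m) K) :
    Phi0 f g hf0 hg0 (toLocalAlg (sumMap f g) q) = tensAux f g q := by
  show phiLoc f g hf0 hg0 (algebraMap _ _ q) = _
  exact phiLoc_algebraMap f g hf0 hg0 q

/-- `Q(F) → Q(f) ⊗ Q(g)` as a `K`-algebra hom. -/
noncomputable def PhiAlg : LocalAlg (sumMap f g) →ₐ[K]
    TensorProduct K (LocalAlg f) (LocalAlg g) :=
  { Phi0 f g hf0 hg0 with
    commutes' := fun a => by
      have h1 : (algebraMap K (LocalAlg (sumMap f g)) a)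
          = toLocalAlg (sumMap f g) (algebraMap K _ a) := rfl
      show Phi0 f g hf0 hg0 (algebraMap K _ a) = _
      rw [h1, Phi0_toLocalAlg]
      exact (tensAux f g).commutes a }

@[simp] lemma PhiAlg_toLocalAlg (q : MvPolynomial (Fin n ⊕ Fin m) K) :
    PhiAlg f g hf0 hg0 (toLocalAlg (sumMap f g) q) = tensAux f g q :=
  Phi0_toLocalAlg f g hf0 hg0 q

lemma rename_inl_notMem {p : MvPolynomial (Fin n) K}
    (hp : p ∈ (originIdeal K (Fin n)).primeCompl) :
    (rename (Sum.inl : Fin n → Fin n ⊕ Fin m) p) ∉ originIdeal K (Fin n ⊕ Fin m) := by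
  intro h
  exact hp (mem_originIdeal_iff.mpr
    (by rw [← constantCoeff_rename (Sum.inl : Fin n → Fin n ⊕ Fin m) p]
        exact mem_originIdeal_iff.mp h))

lemma rename_inr_notMem {p : MvPolynomial (Fin m) K}
    (hp : p ∈ (originIdeal K (Fin m)).primeCompl) :
    (rename (Sum.inr : Fin m → Fin n ⊕ Fin m) p) ∉ originIdeal K (Fin n ⊕ Fin m) := by
  intro h
  exact hp (mem_originIdeal_iff.mpr
    (by rw [← constantCoeff_rename (Sum.inr : Fin m → Fin n ⊕ Fin m) p]
        exact mem_originIdeal_iff.mp h))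

noncomputable def psiLoc1 : OriginLoc K (Fin n) →+* LocalAlg (sumMap f g) :=
  IsLocalization.lift (M := (originIdeal K (Fin n)).primeCompl)
    (g := (toLocalAlg (sumMap f g)).comp
      (rename (Sum.inl : Fin n → Fin n ⊕ Fin m) : MvPolynomial (Fin n) K →ₐ[K] _).toRingHom)
    (fun s => isUnit_toLocalAlg _ (rename_inl_notMem s.2))

noncomputable def psiLoc2 : OriginLoc K (Fin m) →+* LocalAlg (sumMap f g) :=
  IsLocalization.lift (M := (originIdeal K (Fin m)).primeCompl)
    (g := (toLocalAlg (sumMap f g)).comp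
      (rename (Sum.inr : Fin m → Fin n ⊕ Fin m) : MvPolynomial (Fin m) K →ₐ[K] _).toRingHom)
    (fun s => isUnit_toLocalAlg _ (rename_inr_notMem s.2))

@[simp] lemma psiLoc1_algebraMap (p : MvPolynomial (Fin n) K) :
    psiLoc1 f g (algebraMap _ _ p) = toLocalAlg (sumMap f g) (rename Sum.inl p) :=
  IsLocalization.lift_eq _ p

@[simp] lemma psiLoc2_algebraMap (p : MvPolynomial (Fin m) K) :
    psiLoc2 f g (algebraMap _ _ p) = toLocalAlg (sumMap f g) (rename Sum.inr p) :=
  IsLocalization.lift_eq _ p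

lemma psiLoc1_vanish : ∀ a ∈ Ideal.span (Set.range fun i =>
    algebraMap (MvPolynomial (Fin n) K) (OriginLoc K (Fin n)) (f i)), psiLoc1 f g a = 0 := by
  have hsp : Ideal.span (Set.range fun i =>
      algebraMap (MvPolynomial (Fin n) K) (OriginLoc K (Fin n)) (f i))
        ≤ RingHom.ker (psiLoc1 f g) := by
    rw [Ideal.span_le]
    rintro _ ⟨i, rfl⟩
    rw [SetLike.mem_coe, RingHom.mem_ker, psiLoc1_algebraMap]
    exact toLocalAlg_self_eq_zero (sumMap f g) (Sum.inl i)
  exact fun a ha => hsp ha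

lemma psiLoc2_vanish : ∀ a ∈ Ideal.span (Set.range fun j =>
    algebraMap (MvPolynomial (Fin m) K) (OriginLoc K (Fin m)) (g j)), psiLoc2 f g a = 0 := by
  have hsp : Ideal.span (Set.range fun j =>
      algebraMap (MvPolynomial (Fin m) K) (OriginLoc K (Fin m)) (g j))
        ≤ RingHom.ker (psiLoc2 f g) := by
    rw [Ideal.span_le]
    rintro _ ⟨j, rfl⟩
    rw [SetLike.mem_coe, RingHom.mem_ker, psiLoc2_algebraMap]
    exact toLocalAlg_self_eq_zero (sumMap f g) (Sum.inr j)
  exact fun a ha => hsp ha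

/-- `Q(f) → Q(F)`. -/
noncomputable def Psi1 : LocalAlg f →ₐ[K] LocalAlg (sumMap f g) :=
  { Ideal.Quotient.lift _ (psiLoc1 f g) (psiLoc1_vanish f g) with
    commutes' := fun a => by
      show Ideal.Quotient.lift _ (psiLoc1 f g) (psiLoc1_vanish f g)
        (Ideal.Quotient.mk _ (algebraMap _ _ (algebraMap K _ a))) = _
      rw [Ideal.Quotient.lift_mk, psiLoc1_algebraMap, AlgHom.commutes]
      rfl }

noncomputable def Psi2 : LocalAlg g →ₐ[K] LocalAlg (sumMap f g) :=
  { Ideal.Quotient.lift _ (psiLoc2 f g) (psiLoc2_vanish f g) with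
    commutes' := fun a => by
      show Ideal.Quotient.lift _ (psiLoc2 f g) (psiLoc2_vanish f g)
        (Ideal.Quotient.mk _ (algebraMap _ _ (algebraMap K _ a))) = _
      rw [Ideal.Quotient.lift_mk, psiLoc2_algebraMap, AlgHom.commutes]
      rfl }

@[simp] lemma Psi1_toLocalAlg (p : MvPolynomial (Fin n) K) :
    Psi1 f g (toLocalAlg f p) = toLocalAlg (sumMap f g) (rename Sum.inl p) := by
  show Ideal.Quotient.lift _ (psiLoc1 f g) (psiLoc1_vanish f g)
    (Ideal.Quotient.mk _ (algebraMap _ _ p)) = _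
  rw [Ideal.Quotient.lift_mk, psiLoc1_algebraMap]

@[simp] lemma Psi2_toLocalAlg (p : MvPolynomial (Fin m) K) :
    Psi2 f g (toLocalAlg g p) = toLocalAlg (sumMap f g) (rename Sum.inr p) := by
  show Ideal.Quotient.lift _ (psiLoc2 f g) (psiLoc2_vanish f g)
    (Ideal.Quotient.mk _ (algebraMap _ _ p)) = _
  rw [Ideal.Quotient.lift_mk, psiLoc2_algebraMap]

/-- `Q(f) ⊗ Q(g) → Q(F)`. -/
noncomputable def PsiAlg : TensorProduct K (LocalAlg f) (LocalAlg g) →ₐ[K]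
    LocalAlg (sumMap f g) :=
  Algebra.TensorProduct.productMap (Psi1 f g) (Psi2 f g)

lemma Phi_comp_Psi1 : (PhiAlg f g hf0 hg0).comp (Psi1 f g)
    = Algebra.TensorProduct.includeLeft (S := K) := by
  apply localAlg_algHom_ext
  apply MvPolynomial.algHom_ext
  intro i
  simp only [AlgHom.comp_apply, toLocalAlgA_apply, Psi1_toLocalAlg, PhiAlg_toLocalAlg,
    rename_X, tensAux_X_inl, Algebra.TensorProduct.includeLeft_apply]

lemma Phi_comp_Psi2 : (PhiAlg f g hf0 hg0).comp (Psi2 f g)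
    = Algebra.TensorProduct.includeRight := by
  apply localAlg_algHom_ext
  apply MvPolynomial.algHom_ext
  intro j
  simp only [AlgHom.comp_apply, toLocalAlgA_apply, Psi2_toLocalAlg, PhiAlg_toLocalAlg,
    rename_X, tensAux_X_inr, Algebra.TensorProduct.includeRight_apply]

lemma Phi_comp_Psi : (PhiAlg f g hf0 hg0).comp (PsiAlg f g)
    = AlgHom.id K (TensorProduct K (LocalAlg f) (LocalAlg g)) := by
  apply Algebra.TensorProduct.ext'
  intro a b
  have h1 := AlgHom.congr_fun (Phi_comp_Psi1 f g hf0 hg0) a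
  have h2 := AlgHom.congr_fun (Phi_comp_Psi2 f g hf0 hg0) b
  simp only [AlgHom.comp_apply, Algebra.TensorProduct.includeLeft_apply,
    Algebra.TensorProduct.includeRight_apply] at h1 h2
  simp only [AlgHom.comp_apply, AlgHom.id_apply, PsiAlg,
    Algebra.TensorProduct.productMap_apply_tmul, map_mul, h1, h2,
    Algebra.TensorProduct.tmul_mul_tmul, mul_one, one_mul]

lemma Psi_comp_Phi : (PsiAlg f g).comp (PhiAlg f g hf0 hg0)
    = AlgHom.id K (LocalAlg (sumMap f g)) := by
  apply localAlg_algHom_ext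
  apply MvPolynomial.algHom_ext
  intro v
  simp only [AlgHom.comp_apply, toLocalAlgA_apply, AlgHom.id_apply, PhiAlg_toLocalAlg]
  cases v with
  | inl i =>
      rw [tensAux_X_inl]
      simp only [PsiAlg, Algebra.TensorProduct.productMap_apply_tmul, map_one, mul_one,
        Psi1_toLocalAlg, rename_X]
  | inr j =>
      rw [tensAux_X_inr]
      simp only [PsiAlg, Algebra.TensorProduct.productMap_apply_tmul, map_one, one_mul,
        Psi2_toLocalAlg, rename_X]

/-- The algebra isomorphism `Q(F) ≃ Q(f) ⊗ Q(g)`. -/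
noncomputable def prodEquiv : LocalAlg (sumMap f g) ≃ₐ[K]
    TensorProduct K (LocalAlg f) (LocalAlg g) :=
  AlgEquiv.ofAlgHom (PhiAlg f g hf0 hg0) (PsiAlg f g)
    (Phi_comp_Psi f g hf0 hg0) (Psi_comp_Phi f g hf0 hg0)

@[simp] lemma prodEquiv_toLocalAlg (q : MvPolynomial (Fin n ⊕ Fin m) K) :
    prodEquiv f g hf0 hg0 (toLocalAlg (sumMap f g) q) = tensAux f g q :=
  Phi0_toLocalAlg f g hf0 hg0 q

end Product3


section MainAux
variable {n m : ℕ} (f : Fin n → MvPolynomial (Fin n) K) (g : Fin m → MvPolynomial (Fin m) K)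

lemma det_map_rename_inl (af : Matrix (Fin n) (Fin n) (MvPolynomial (Fin n) K)) :
    rename (Sum.inl : Fin n → Fin n ⊕ Fin m) af.det
      = (af.map ⇑(rename (Sum.inl : Fin n → Fin n ⊕ Fin m))).det := by
  have h := RingHom.map_det ((rename (Sum.inl : Fin n → Fin n ⊕ Fin m) :
    MvPolynomial (Fin n) K →ₐ[K] MvPolynomial (Fin n ⊕ Fin m) K) :
      MvPolynomial (Fin n) K →+* MvPolynomial (Fin n ⊕ Fin m) K) af
  simpa [RingHom.mapMatrix_apply] using h

lemma det_map_rename_inr (ag : Matrix (Fin m) (Fin m) (MvPolynomial (Fin m) K)) :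
    rename (Sum.inr : Fin m → Fin n ⊕ Fin m) ag.det
      = (ag.map ⇑(rename (Sum.inr : Fin m → Fin n ⊕ Fin m))).det := by
  have h := RingHom.map_det ((rename (Sum.inr : Fin m → Fin n ⊕ Fin m) :
    MvPolynomial (Fin m) K →ₐ[K] MvPolynomial (Fin n ⊕ Fin m) K) :
      MvPolynomial (Fin m) K →+* MvPolynomial (Fin n ⊕ Fin m) K) ag
  simpa [RingHom.mapMatrix_apply] using h

end MainAux

open MvPolynomial in
theorem localAlg_prod_tensor_and_deg_mul (K : Type) [Field K] (hK : ringChar K ≠ 2)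
    (n m : ℕ) (f : Fin n → MvPolynomial (Fin n) K) (g : Fin m → MvPolynomial (Fin m) K)
    (hf0 : ∀ i, constantCoeff (f i) = 0) (hg0 : ∀ j, constantCoeff (g j) = 0)
    (hfin : FiniteDimensional K (LocalAlg f)) (hgin : FiniteDimensional K (LocalAlg g)) :
    Nonempty
        (LocalAlg (Sum.elim (fun i => rename Sum.inl (f i))
            (fun j => rename Sum.inr (g j)) : Fin n ⊕ Fin m →
              MvPolynomial (Fin n ⊕ Fin m) K)
          ≃ₐ[K] TensorProduct K (LocalAlg f) (LocalAlg g)) ∧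
      ∀ df dg : GW K, IsEKLDeg f df → IsEKLDeg g dg →
        IsEKLDeg (Sum.elim (fun i => rename Sum.inl (f i))
          (fun j => rename Sum.inr (g j))) (df * dg) := by
  classical
  refine ⟨⟨prodEquiv f g hf0 hg0⟩, ?_⟩
  rintro df dg ⟨af, haf, mf, bf, φf, hφf, hsf, hndf, hclsf⟩
    ⟨ag, hag, mg, bg, φg, hφg, hsg, hndg, hclsg⟩
  set e := prodEquiv f g hf0 hg0 with he_def
  set aF : Matrix (Fin n ⊕ Fin m) (Fin n ⊕ Fin m) (MvPolynomial (Fin n ⊕ Fin m) K) :=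
    Matrix.fromBlocks (af.map (rename Sum.inl)) 0 0 (ag.map (rename Sum.inr)) with haF_def
  have haF : ∀ v, sumMap f g v = ∑ w, aF v w * X w := by
    rintro (i | j)
    · rw [Fintype.sum_sum_type]
      simp only [haF_def, Matrix.fromBlocks_apply₁₁, Matrix.fromBlocks_apply₁₂,
        Matrix.map_apply, Matrix.zero_apply, zero_mul, Finset.sum_const_zero, add_zero]
      show rename Sum.inl (f i) = _
      rw [haf i, map_sum]
      simp only [map_mul, rename_X]
    · rw [Fintype.sum_sum_type]
      simp only [haF_def, Matrix.fromBlocks_apply₂₁, Matrix.fromBlocks_apply₂₂,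
        Matrix.map_apply, Matrix.zero_apply, zero_mul, Finset.sum_const_zero, zero_add]
      show rename Sum.inr (g j) = _
      rw [hag j, map_sum]
      simp only [map_mul, rename_X]
  have hdet : aF.det = rename Sum.inl af.det * rename Sum.inr ag.det := by
    rw [haF_def, Matrix.det_fromBlocks_zero₂₁, ← det_map_rename_inl, ← det_map_rename_inr]
  -- basis and functional on Q(F)
  set bF : Module.Basis (Fin (mf * mg)) K (LocalAlg (sumMap f g)) :=
    (((bf.tensorProduct bg).reindex finProdFinEquiv).map e.symm.toLinearEquiv) with hbF_def
  set φF : LocalAlg (sumMap f g) →ₗ[K] K :=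
    (TensorProduct.lid K K).toLinearMap ∘ₗ (TensorProduct.map φf φg) ∘ₗ e.toLinearMap
    with hphiF_def
  have hbF : ∀ k, bF k
      = e.symm (bf (finProdFinEquiv.symm k).1 ⊗ₜ[K] bg (finProdFinEquiv.symm k).2) := by
    intro k
    rw [hbF_def, Module.Basis.map_apply, Module.Basis.reindex_apply, Module.Basis.tensorProduct_apply']
    rfl
  have hphimul : ∀ (u u' : LocalAlg f) (v v' : LocalAlg g),
      φF (e.symm (u ⊗ₜ[K] v) * e.symm (u' ⊗ₜ[K] v')) = φf (u * u') * φg (v * v') := by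
    intro u u' v v'
    have h : e.symm (u ⊗ₜ[K] v) * e.symm (u' ⊗ₜ[K] v')
        = e.symm ((u * u') ⊗ₜ[K] (v * v')) := by
      rw [← map_mul, Algebra.TensorProduct.tmul_mul_tmul]
    rw [h, hphiF_def]
    simp only [LinearMap.comp_apply, AlgEquiv.toLinearMap_apply, AlgEquiv.apply_symm_apply,
      TensorProduct.map_tmul, LinearEquiv.coe_coe, TensorProduct.lid_tmul, smul_eq_mul]
  have hM : (Matrix.of fun k l : Fin (mf * mg) => φF (bF k * bF l))
      = Matrix.reindex finProdFinEquiv finProdFinEquiv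
        (Matrix.kroneckerMap (· * ·)
          (Matrix.of fun i j : Fin mf => φf (bf i * bf j))
          (Matrix.of fun i j : Fin mg => φg (bg i * bg j))) := by
    ext k l
    rw [Matrix.reindex_apply, Matrix.submatrix_apply, Matrix.kroneckerMap_apply]
    simp only [Matrix.of_apply]
    rw [hbF k, hbF l, hphimul]
  have hs : (Matrix.of fun i j : Fin (mf * mg) => φF (bF i * bF j)).IsSymm := by
    refine Matrix.IsSymm.ext fun k l => ?_
    simp only [Matrix.of_apply]
    rw [mul_comm (bF l) (bF k)]
  have hnd : IsUnit (Matrix.of fun i j : Fin (mf * mg) => φF (bF i * bF j)).det := by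
    rw [hM, Matrix.det_reindex_self, Matrix.det_kronecker]
    exact (hndf.pow _).mul (hndg.pow _)
  refine ⟨aF, haF, mf * mg, bF, φF, ?_, hs, hnd, ?_⟩
  · -- the functional takes value 1 on the distinguished socle element
    have htl : tensAux f g (rename Sum.inl af.det) = toLocalAlg f af.det ⊗ₜ[K] 1 := by
      have h := AlgHom.congr_fun (tensAux_comp_rename_inl f g) af.det
      simpa using h
    have htr : tensAux f g (rename Sum.inr ag.det)
        = (1 : LocalAlg f) ⊗ₜ[K] toLocalAlg g ag.det := by
      have h := AlgHom.congr_fun (tensAux_comp_rename_inr f g) ag.det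
      simpa using h
    have hE : e (toLocalAlg (sumMap f g) aF.det)
        = toLocalAlg f af.det ⊗ₜ[K] toLocalAlg g ag.det := by
      rw [he_def, prodEquiv_toLocalAlg, hdet, map_mul, htl, htr,
        Algebra.TensorProduct.tmul_mul_tmul, mul_one, one_mul]
    rw [hphiF_def]
    simp only [LinearMap.comp_apply, AlgEquiv.toLinearMap_apply]
    rw [hE]
    simp only [TensorProduct.map_tmul, LinearEquiv.coe_coe, TensorProduct.lid_tmul, hφf, hφg,
      smul_eq_mul, mul_one]
  · -- the Grothendieck–Witt class multiplies
    have hrel := RingQuot.mkRingHom_rel (r := GWRel K) (GWRel.mul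
      ⟨mf, Matrix.of fun i j => φf (bf i * bf j), hsf, hndf⟩
      ⟨mg, Matrix.of fun i j => φg (bg i * bg j), hsg, hndg⟩
      ⟨mf * mg, Matrix.of fun i j => φF (bF i * bF j), hs, hnd⟩ rfl
      (by
        simp only [finCongr_refl, Matrix.reindex_apply, Equiv.refl_symm,
          Equiv.coe_refl, Matrix.submatrix_id_id]
        exact hM))
    rw [← hclsf, ← hclsg]
    exact hrel.trans (map_mul _ _ _)
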